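/- Let α, β, ζ₁, ζ₂ ∈ ℝ, let a, b ∈ ℝ² be linearly independent, and let Imax > 0. Define M₁ := M(α, a, ζ₁) and M₂ := M(β, b, ζ₂). Then { (Tr(M₁ W), Tr(M₂ W)) : W ∈ 𝒲 } = { (α‖x‖² + ⟨a,x⟩ + ζ₁, β‖x‖² + ⟨b,x⟩ + ζ₂) : x ∈ ℝ², ‖x‖ ≤ Imax }. -/

import Mathlib

open scoped RealInnerProductSpace

/-- `M(α, a, ζ)`: the 3×3 symmetric matrix with top-left 2×2 block `α·I₂`,
top-right column `a/2`, bottom-left row `aᵀ/2`, and bottom-right entry `ζ`. -/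
noncomputable def Mmat (α : ℝ) (a : EuclideanSpace ℝ (Fin 2)) (ζ : ℝ) :
    Matrix (Fin 3) (Fin 3) ℝ :=
  !![α, 0, a 0 / 2; 0, α, a 1 / 2; a 0 / 2, a 1 / 2, ζ]

/-- The SDP feasible set `𝒲`: 3×3 real symmetric PSD matrices with
`W₁₁ + W₂₂ ≤ Imax²` and `W₃₃ = 1`. -/
def Wset (Imax : ℝ) : Set (Matrix (Fin 3) (Fin 3) ℝ) :=
  {W | W.PosSemidef ∧ W 0 0 + W 1 1 ≤ Imax ^ 2 ∧ W 2 2 = 1}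

lemma norm_sq_eq' (x : EuclideanSpace ℝ (Fin 2)) : ‖x‖ ^ 2 = x 0 * x 0 + x 1 * x 1 := by
  rw [EuclideanSpace.norm_sq_eq, Fin.sum_univ_two, Real.norm_eq_abs, Real.norm_eq_abs, sq_abs, sq_abs]
  ring

lemma inner_eq' (a x : EuclideanSpace ℝ (Fin 2)) : ⟪a, x⟫ = a 0 * x 0 + a 1 * x 1 := by
  simp [PiLp.inner_apply, Fin.sum_univ_two]
  ring

lemma trace_eq' (α ζ : ℝ) (a : EuclideanSpace ℝ (Fin 2)) (W : Matrix (Fin 3) (Fin 3) ℝ)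
    (hs : W 2 0 = W 0 2) (hs2 : W 2 1 = W 1 2) (h33 : W 2 2 = 1) :
    (Mmat α a ζ * W).trace
      = α * (W 0 0 + W 1 1) + (a 0 * W 0 2 + a 1 * W 1 2) + ζ := by
  simp [Mmat, Matrix.trace, Matrix.mul_apply, Fin.sum_univ_three, Matrix.diag, hs, hs2, h33]
  ring

lemma norm_le_of_sq' (r I : ℝ) (h : r ^ 2 ≤ I ^ 2) (hr : 0 ≤ r) (hI : 0 < I) : r ≤ I := by
  nlinarith

lemma quad_minor' (p q : ℝ) (h : ∀ l : ℝ, 0 ≤ p * (l * l) + (2 * q) * l + 1) : q ^ 2 ≤ p := by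
  have := discrim_le_zero h
  rw [discrim] at this
  nlinarith

lemma minor0' (W : Matrix (Fin 3) (Fin 3) ℝ) (hp : W.PosSemidef)
    (h33 : W 2 2 = 1) (hs : W 2 0 = W 0 2) : W 0 2 ^ 2 ≤ W 0 0 := by
  apply quad_minor'
  intro l
  have := hp.dotProduct_mulVec_nonneg ![l, 0, 1]
  simp [dotProduct, Matrix.mulVec, Fin.sum_univ_three, h33, hs] at this
  nlinarith

lemma minor1' (W : Matrix (Fin 3) (Fin 3) ℝ) (hp : W.PosSemidef)
    (h33 : W 2 2 = 1) (hs : W 2 1 = W 1 2) : W 1 2 ^ 2 ≤ W 1 1 := by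
  apply quad_minor'
  intro l
  have := hp.dotProduct_mulVec_nonneg ![0, l, 1]
  simp [dotProduct, Matrix.mulVec, Fin.sum_univ_three, h33, hs] at this
  nlinarith

lemma rankone_psd' (x : EuclideanSpace ℝ (Fin 2)) :
    (Matrix.of fun i j => (![x 0, x 1, 1] : Fin 3 → ℝ) i * ![x 0, x 1, 1] j).PosSemidef := by
  rw [Matrix.posSemidef_iff_dotProduct_mulVec]
  constructor
  · ext i j
    simp [Matrix.conjTranspose_apply, mul_comm]
  · intro y
    simp only [dotProduct, Matrix.mulVec, Fin.sum_univ_three, Matrix.of_apply,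
      Matrix.cons_val_zero, Matrix.cons_val_one, Matrix.head_cons, star_trivial, Pi.star_apply,
      Matrix.cons_val_two, Matrix.tail_cons]
    nlinarith [sq_nonneg (x 0 * y 0 + x 1 * y 1 + y 2)]

/-- exactness of the semidefinite description of the feasible
output set: the SDP image `{(Tr(M₁W), Tr(M₂W)) : W ∈ 𝒲}` equals the image of
the current ball under the pair of quadratic output maps. -/
theorem stmt8 (α β ζ₁ ζ₂ : ℝ) (a b : EuclideanSpace ℝ (Fin 2))
    (hab : LinearIndependent ℝ ![a, b]) (Imax : ℝ) (hI : 0 < Imax) :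
    {p : ℝ × ℝ | ∃ W ∈ Wset Imax,
        p = ((Mmat α a ζ₁ * W).trace, (Mmat β b ζ₂ * W).trace)} =
    {p : ℝ × ℝ | ∃ x : EuclideanSpace ℝ (Fin 2), ‖x‖ ≤ Imax ∧
        p = (α * ‖x‖ ^ 2 + ⟪a, x⟫ + ζ₁, β * ‖x‖ ^ 2 + ⟪b, x⟫ + ζ₂)} := by
  -- the linear equivalence x ↦ (⟪a,x⟫, ⟪b,x⟫)
  set L : EuclideanSpace ℝ (Fin 2) →ₗ[ℝ] ℝ × ℝ :=
    ((innerSL ℝ a).prod (innerSL ℝ b)).toLinearMap with hL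
  have hLapp : ∀ x, L x = (⟪a, x⟫, ⟪b, x⟫) := fun x => rfl
  have hinj : Function.Injective L := by
    rw [← LinearMap.ker_eq_bot, Submodule.eq_bot_iff]
    intro x hx
    have hax : ⟪a, x⟫ = 0 := congrArg Prod.fst hx
    have hbx : ⟪b, x⟫ = 0 := congrArg Prod.snd hx
    have hspan : Submodule.span ℝ (Set.range ![a, b]) = ⊤ :=
      hab.span_eq_top_of_card_eq_finrank (by simp)
    have hr : Set.range ![a, b] = {a, b} := by
      simp [Matrix.range_cons, Matrix.range_empty, Set.pair_comm]
    rw [hr] at hspan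
    obtain ⟨c, d, hcd⟩ := Submodule.mem_span_pair.mp
      (hspan ▸ Submodule.mem_top : x ∈ Submodule.span ℝ ({a, b} : Set (EuclideanSpace ℝ (Fin 2))))
    have h2 : ⟪x, x⟫ = 0 := by
      have hx2 : ⟪x, x⟫ = ⟪c • a + d • b, x⟫ := by rw [hcd]
      rw [hx2, inner_add_left, inner_smul_left, inner_smul_left, hax, hbx]
      simp
    exact inner_self_eq_zero.mp h2
  have hsurj : Function.Surjective L :=
    (LinearMap.injective_iff_surjective_of_finrank_eq_finrank (by simp)).mp hinj
  set e := LinearEquiv.ofBijective L ⟨hinj, hsurj⟩ with he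
  have hesymm_cont : Continuous (e.symm : ℝ × ℝ → EuclideanSpace ℝ (Fin 2)) :=
    (e.symm : ℝ × ℝ →ₗ[ℝ] EuclideanSpace ℝ (Fin 2)).continuous_of_finiteDimensional
  ext p
  simp only [Set.mem_setOf_eq]
  constructor
  · rintro ⟨W, ⟨hpsd, htr, h33⟩, rfl⟩
    -- symmetry
    have hsym : ∀ i j, W i j = W j i := by
      intro i j
      have := congrFun (congrFun hpsd.1 i) j
      simpa [Matrix.conjTranspose_apply] using this.symm
    set t : ℝ := W 0 0 + W 1 1 with ht
    have h02 : W 0 2 ^ 2 ≤ W 0 0 := minor0' W hpsd h33 (hsym 2 0)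
    have h12 : W 1 2 ^ 2 ≤ W 1 1 := minor1' W hpsd h33 (hsym 2 1)
    have ht0 : 0 ≤ t := by nlinarith
    set c₁ : ℝ := α * t + (a 0 * W 0 2 + a 1 * W 1 2) with hc₁
    set c₂ : ℝ := β * t + (b 0 * W 0 2 + b 1 * W 1 2) with hc₂
    set w : EuclideanSpace ℝ (Fin 2) := WithLp.toLp 2 ![W 0 2, W 1 2] with hw
    have hw0 : w 0 = W 0 2 := rfl
    have hw1 : w 1 = W 1 2 := rfl
    have hLw : L w = (c₁ - α * t, c₂ - β * t) := by
      rw [hLapp, inner_eq', inner_eq', hw0, hw1]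
      simp only [hc₁, hc₂, Prod.mk.injEq]
      constructor <;> ring
    set φ : ℝ → EuclideanSpace ℝ (Fin 2) := fun s => e.symm (c₁ - α * s, c₂ - β * s) with hφ
    have hφcont : Continuous φ := by
      apply hesymm_cont.comp
      exact (continuous_const.sub (continuous_const.mul continuous_id)).prodMk
        (continuous_const.sub (continuous_const.mul continuous_id))
    set f : ℝ → ℝ := fun s => ‖φ s‖ ^ 2 - s with hf
    have hfcont : Continuous f := (hφcont.norm.pow 2).sub continuous_id
    have hφt : φ t = w := by
      rw [hφ]
      exact e.symm_apply_eq.mpr hLw.symm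
    have hft : f t ≤ 0 := by
      have hnw : ‖w‖ ^ 2 = W 0 2 ^ 2 + W 1 2 ^ 2 := by
        rw [norm_sq_eq', hw0, hw1]; ring
      simp only [hf, hφt, hnw]
      linarith [h02, h12, ht]
    have hfneg : 0 ≤ f (-1) := by
      simp only [hf]
      linarith [sq_nonneg ‖φ (-1)‖]
    have hmem : (0 : ℝ) ∈ f '' Set.Icc (-1) t := by
      apply intermediate_value_Icc' (by linarith) hfcont.continuousOn
      exact ⟨hft, hfneg⟩
    obtain ⟨s, hs, hfs⟩ := hmem
    set x := φ s with hx
    have hxnorm : ‖x‖ ^ 2 = s := by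
      have : ‖φ s‖ ^ 2 - s = 0 := hfs
      linarith
    have hLx : L x = (c₁ - α * s, c₂ - β * s) := by
      rw [hx, hφ]
      exact e.apply_symm_apply _
    have hax : ⟪a, x⟫ = c₁ - α * s := by
      have := congrArg Prod.fst hLx; rwa [hLapp] at this
    have hbx : ⟪b, x⟫ = c₂ - β * s := by
      have := congrArg Prod.snd hLx; rwa [hLapp] at this
    refine ⟨x, ?_, ?_⟩
    · have h1 : ‖x‖ ^ 2 ≤ Imax ^ 2 := by
        rw [hxnorm]
        exact le_trans hs.2 htr
      exact norm_le_of_sq' _ _ h1 (norm_nonneg x) hI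
    · rw [trace_eq' α ζ₁ a W (hsym 2 0) (hsym 2 1) h33,
        trace_eq' β ζ₂ b W (hsym 2 0) (hsym 2 1) h33]
      rw [hxnorm, hax, hbx]
      simp only [hc₁, hc₂, ← ht, Prod.mk.injEq]
      constructor <;> ring_nf
  · rintro ⟨x, hx, rfl⟩
    set W : Matrix (Fin 3) (Fin 3) ℝ :=
      Matrix.of fun i j => (![x 0, x 1, 1] : Fin 3 → ℝ) i * ![x 0, x 1, 1] j with hW
    have e00 : W 0 0 = x 0 * x 0 := by simp [hW]
    have e11 : W 1 1 = x 1 * x 1 := by simp [hW]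
    have e22 : W 2 2 = 1 := by simp [hW]
    have e02 : W 0 2 = x 0 := by simp [hW]
    have e12 : W 1 2 = x 1 := by simp [hW]
    have e20 : W 2 0 = x 0 := by simp [hW]
    have e21 : W 2 1 = x 1 := by simp [hW]
    refine ⟨W, ⟨rankone_psd' x, ?_, e22⟩, ?_⟩
    · rw [e00, e11]
      have : ‖x‖ ^ 2 ≤ Imax ^ 2 := by nlinarith [norm_nonneg x]
      rw [norm_sq_eq'] at this
      exact this
    · rw [trace_eq' α ζ₁ a W (by rw [e20, e02]) (by rw [e21, e12]) e22,
        trace_eq' β ζ₂ b W (by rw [e20, e02]) (by rw [e21, e12]) e22]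
      rw [e00, e11, e02, e12, norm_sq_eq', inner_eq', inner_eq']
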